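/- Let γ ∈ (0, (1−λₙ(W))⁻¹) where W satisfies the standard assumptions (symmetric, null(I−W)=span(𝟏ₙ), −I ≺ W ⪯ I) and λₙ(W) is its smallest eigenvalue. Let δ ∈ [0,1) and q = δ(1+γ(1−λₙ(W)))/(1−γ(1−λₙ(W))). Then the matrix γ(W−I)·(qI − δI + (q+δ)γ(W−I)) is negative semidefinite. -/

import Mathlib

open Matrix

/-- with γ ∈ (0, (1-λₙ(W))⁻¹), δ ∈ [0,1), and
q = δ(1+γ(1-λₙ))/(1-γ(1-λₙ)), the matrix γ(W-I)(qI - δI + (q+δ)γ(W-I)) is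
negative semidefinite. λₙ(W) is the smallest eigenvalue, characterized as the greatest
uniform Rayleigh lower bound. -/
theorem stmt16 {n : ℕ} (W : Matrix (Fin n) (Fin n) ℝ)
    (hsym : W.IsSymm)
    (hnull : ∀ x : Fin n → ℝ, (1 - W).mulVec x = 0 ↔ ∃ c : ℝ, x = fun _ => c)
    (hlt : ∀ x : Fin n → ℝ, x ≠ 0 → -(x ⬝ᵥ x) < x ⬝ᵥ W.mulVec x)
    (hle : ∀ x : Fin n → ℝ, x ⬝ᵥ W.mulVec x ≤ x ⬝ᵥ x)
    (lamn : ℝ)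
    (hlamn : IsGreatest {r : ℝ | ∀ x : Fin n → ℝ, r * (x ⬝ᵥ x) ≤ x ⬝ᵥ W.mulVec x} lamn)
    (γ δ q : ℝ) (hγ0 : 0 < γ) (hγ1 : γ < (1 - lamn)⁻¹) (hδ0 : 0 ≤ δ) (hδ1 : δ < 1)
    (hq : q = δ * (1 + γ * (1 - lamn)) / (1 - γ * (1 - lamn))) :
    (-(γ • ((W - 1) * ((q - δ) • (1 : Matrix (Fin n) (Fin n) ℝ) +
      ((q + δ) * γ) • (W - 1))))).PosSemidef := by
  have ha : 0 < 1 - lamn := by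
    by_contra h
    push_neg at h
    have : (1 - lamn)⁻¹ ≤ 0 := inv_nonpos.mpr h
    linarith
  have hL1 : γ * (1 - lamn) < 1 := by
    have := mul_lt_mul_of_pos_right hγ1 ha
    rwa [inv_mul_cancel₀ (ne_of_gt ha)] at this
  have hLpos : 0 < γ * (1 - lamn) := mul_pos hγ0 ha
  have hqδ : q - δ = (q + δ) * (γ * (1 - lamn)) := by
    have h1L : (1 : ℝ) - γ * (1 - lamn) ≠ 0 := by linarith
    rw [hq]; field_simp; ring
  have hq0 : 0 ≤ q := by
    rw [hq]; exact div_nonneg (by nlinarith) (by linarith)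
  set B : Matrix (Fin n) (Fin n) ℝ := 1 - W with hBdef
  have hBsym : B.IsHermitian := by
    have : W.IsHermitian := by
      unfold Matrix.IsHermitian
      rw [conjTranspose_eq_transpose_of_trivial]
      exact hsym
    exact (isHermitian_one.sub this)
  have hB : B.PosSemidef := by
    refine PosSemidef.of_dotProduct_mulVec_nonneg hBsym fun x => ?_
    have := hle x
    simp only [hBdef, sub_mulVec, one_mulVec, dotProduct_sub, star_trivial]
    linarith
  have hC : ((1 - lamn) • (1 : Matrix (Fin n) (Fin n) ℝ) - B).PosSemidef := by
    refine PosSemidef.of_dotProduct_mulVec_nonneg ?_ ?_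
    · have h1 : ((1 - lamn) • (1 : Matrix (Fin n) (Fin n) ℝ)).IsHermitian := by
        simp [Matrix.IsHermitian, conjTranspose_smul]
      exact h1.sub hBsym
    · intro x
      have := hlamn.1 x
      simp only [hBdef, sub_mulVec, smul_mulVec, one_mulVec, dotProduct_sub,
        dotProduct_smul, star_trivial, smul_eq_mul] at *
      linarith
  obtain ⟨S, hSsa, -, hSS⟩ : ∃ S : Matrix (Fin n) (Fin n) ℝ, IsSelfAdjoint S ∧
      QuasispectrumRestricts S ContinuousMap.realToNNReal ∧ S * S = B := by
    open scoped MatrixOrder in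
    exact CFC.exists_sqrt_of_isSelfAdjoint_of_quasispectrumRestricts hB.isHermitian
      (QuasispectrumRestricts.nnreal_of_nonneg hB.nonneg)
  have hSH : Sᴴ = S := hSsa
  have key : B * ((1 - lamn) • (1 : Matrix (Fin n) (Fin n) ℝ) - B) =
      Sᴴ * ((1 - lamn) • (1 : Matrix (Fin n) (Fin n) ℝ) - B) * S := by
    rw [hSH, ← hSS]
    simp only [Matrix.mul_sub, Matrix.sub_mul, Matrix.mul_smul, Matrix.smul_mul,
      Matrix.mul_one, Matrix.one_mul, Matrix.mul_assoc]
  have psd : (B * ((1 - lamn) • (1 : Matrix (Fin n) (Fin n) ℝ) - B)).PosSemidef := by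
    rw [key]; exact hC.conjTranspose_mul_mul_same S
  have heq : (-(γ • ((W - 1) * ((q - δ) • (1 : Matrix (Fin n) (Fin n) ℝ) +
      ((q + δ) * γ) • (W - 1))))) =
      (γ * ((q + δ) * γ)) • (B * ((1 - lamn) • (1 : Matrix (Fin n) (Fin n) ℝ) - B)) := by
    have hW1 : W - 1 = -B := by rw [hBdef]; exact (neg_sub 1 W).symm
    rw [hqδ, hW1]
    simp only [Matrix.mul_sub, Matrix.mul_add, Matrix.mul_smul, Matrix.smul_mul,
      Matrix.mul_one, Matrix.one_mul, Matrix.neg_mul, Matrix.mul_neg, smul_sub, smul_add,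
      smul_neg, smul_smul, neg_neg, neg_add]
    module
  rw [heq]
  refine PosSemidef.of_dotProduct_mulVec_nonneg (show _ᴴ = _ by rw [conjTranspose_smul, star_trivial, psd.1.eq]) fun x => ?_
  have := psd.dotProduct_mulVec_nonneg x
  simp only [smul_mulVec, dotProduct_smul, smul_eq_mul] at *
  have hc : 0 ≤ γ * ((q + δ) * γ) := by positivity
  exact mul_nonneg hc this
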